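/- Consider the formal delta function identity: for formal variables x_0, x_1, x_2, x_0^{−1} δ((x_1 − x_2)/x_0) − x_0^{−1} δ((−x_2 + x_1)/x_0) = x_1^{−1} δ((x_2 + x_0)/x_1), where δ(x) = ∑_{n∈ℤ} x^n and binomial expressions (x ± y)^n for n ∈ ℤ are expanded in nonnegative powers of the second variable. -/

import Mathlib

/-- The generalized binomial coefficient `C(n, k) = n(n-1)⋯(n-k+1)/k!` for `n ∈ ℤ`,
valued in `ℂ`. -/
noncomputable def cbinom (n : ℤ) (k : ℕ) : ℂ :=
  (∏ i ∈ Finset.range k, ((n : ℂ) - (i : ℂ))) / (Nat.factorial k : ℂ)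

lemma prod_reflect (z : ℂ) (k : ℕ) :
    ∏ i ∈ Finset.range k, (((k : ℂ) - 1 - z) - i) = (-1) ^ k * ∏ i ∈ Finset.range k, (z - i) := by
  have hneg : ∏ i ∈ Finset.range k, (-(z - (i : ℂ))) = (-1) ^ k * ∏ i ∈ Finset.range k, (z - i) := by
    induction k with
    | zero => simp
    | succ n ih =>
        rw [Finset.prod_range_succ, Finset.prod_range_succ, ih, pow_succ]
        ring
  have h := Finset.prod_range_reflect (fun j => ((k : ℂ) - 1 - z) - j) k
  rw [← h, ← hneg]
  refine Finset.prod_congr rfl fun j hj => ?_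
  rw [Finset.mem_range] at hj
  have h1 : ((k - 1 - j : ℕ) : ℂ) = (k : ℂ) - 1 - j := by
    push_cast [Nat.cast_sub (by omega : j ≤ k - 1), Nat.cast_sub (by omega : (1:ℕ) ≤ k)]
    ring
  rw [h1]; ring

lemma cbinom_neg (n : ℤ) (k : ℕ) : cbinom n k = (-1) ^ k * cbinom ((k : ℤ) - n - 1) k := by
  unfold cbinom
  have h := prod_reflect (n : ℂ) k
  have hsq : ((-1 : ℂ)) ^ k * (-1) ^ k = 1 := by rw [← mul_pow]; norm_num
  push_cast
  rw [show ((k : ℂ) - n - 1) = ((k : ℂ) - 1 - n) by ring, h, ← mul_div_assoc, ← mul_assoc, hsq,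
    one_mul]

lemma cbinom_nat (m k : ℕ) : cbinom (m : ℤ) k = (m.choose k : ℂ) := by
  unfold cbinom
  push_cast
  have hprod : ∏ i ∈ Finset.range k, ((m : ℂ) - i) = (m.descFactorial k : ℂ) := by
    by_cases h : k ≤ m
    · rw [Nat.descFactorial_eq_prod_range, Nat.cast_prod]
      refine Finset.prod_congr rfl fun i hi => ?_
      rw [Finset.mem_range] at hi
      rw [Nat.cast_sub (by omega)]
    · rw [Nat.descFactorial_of_lt (by omega)]
      push_cast
      exact Finset.prod_eq_zero (i := m) (Finset.mem_range.mpr (by omega)) (by simp)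
  rw [hprod, Nat.descFactorial_eq_factorial_mul_choose]
  push_cast
  have hf : (k.factorial : ℂ) ≠ 0 := Nat.cast_ne_zero.mpr k.factorial_ne_zero
  rw [mul_comm, mul_div_assoc, div_self hf, mul_one]

lemma neg_one_pow_congr' (j k : ℕ) (h : j % 2 = k % 2) : (-1 : ℂ) ^ j = (-1) ^ k := by
  rcases Nat.even_or_odd j with hj | hj
  · have hk : Even k := by rw [Nat.even_iff] at hj ⊢; omega
    rw [hj.neg_one_pow, hk.neg_one_pow]
  · have hk : Odd k := by rw [Nat.odd_iff] at hj ⊢; omega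
    rw [hj.neg_one_pow, hk.neg_one_pow]

lemma neg_one_zpow_natAbs (m : ℤ) : (-1 : ℂ) ^ m = (-1) ^ m.natAbs := by
  rcases Int.even_or_odd m with he | ho
  · rw [he.neg_one_zpow, (Int.natAbs_even.mpr he).neg_one_pow]
  · rw [ho.neg_one_zpow, (Int.natAbs_odd.mpr ho).neg_one_pow]

lemma cbinom_symm (m : ℤ) (hm : 0 ≤ m) (k l : ℕ) (hkl : (k : ℤ) + l = m) :
    cbinom m k = cbinom m l := by
  obtain ⟨mn, rfl⟩ := Int.eq_ofNat_of_zero_le hm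
  rw [cbinom_nat, cbinom_nat]
  have hl : l = mn - k := by omega
  subst hl
  rw [Nat.choose_symm (by omega)]

lemma cbinom_zero_of_lt (m : ℤ) (hm : 0 ≤ m) (k : ℕ) (hk : m < (k : ℤ)) : cbinom m k = 0 := by
  obtain ⟨mn, rfl⟩ := Int.eq_ofNat_of_zero_le hm
  rw [cbinom_nat, Nat.choose_eq_zero_of_lt (by omega)]
  simp

/-- The formal delta-function identity
`x₀⁻¹ δ((x₁ − x₂)/x₀) − x₀⁻¹ δ((−x₂ + x₁)/x₀) = x₁⁻¹ δ((x₂ + x₀)/x₁)`,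
stated as an equality of the coefficients of `x₀^a x₁^b x₂^c` for all `a b c ∈ ℤ`,
where `(x₁ − x₂)^n` is expanded in nonnegative powers of `x₂`, `(−x₂ + x₁)^n` in
nonnegative powers of `x₁`, and `(x₂ + x₀)^n` in nonnegative powers of `x₀`. -/

theorem stmt8 (a b c : ℤ) :
    (if 0 ≤ c ∧ b = (-a - 1) - c then cbinom (-a - 1) c.toNat * (-1 : ℂ) ^ c.toNat else 0)
      - (if 0 ≤ b ∧ c = (-a - 1) - b then
          cbinom (-a - 1) b.toNat * (-1 : ℂ) ^ ((-a - 1) - b) else 0)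
      = (if 0 ≤ a ∧ c = (-b - 1) - a then cbinom (-b - 1) a.toNat else 0) := by
  by_cases h : a + b + c = -1
  · rcases le_or_gt 0 a with ha | ha <;> rcases le_or_gt 0 b with hb | hb <;>
      rcases le_or_gt 0 c with hc | hc
    · omega
    · -- a ≥ 0, b ≥ 0, c < 0  (case A2)
      rw [if_neg (by omega), if_pos ⟨hb, by omega⟩, if_pos ⟨ha, by omega⟩]
      rw [cbinom_neg (-a - 1) b.toNat, cbinom_neg (-b - 1) a.toNat]
      rw [show ((b.toNat : ℤ) - (-a - 1) - 1) = a + b by omega,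
        show ((a.toNat : ℤ) - (-b - 1) - 1) = a + b by omega,
        cbinom_symm (a + b) (by omega) b.toNat a.toNat (by omega),
        show ((-a - 1) - b) = c by omega, neg_one_zpow_natAbs c]
      rw [zero_sub, mul_assoc, mul_comm (cbinom (a + b) a.toNat), ← mul_assoc, ← neg_mul,
        ← pow_add]
      congr 1
      rw [show (-(-1 : ℂ) ^ (b.toNat + c.natAbs)) = (-1 : ℂ) ^ (b.toNat + c.natAbs + 1) by
        rw [pow_succ]; ring]
      exact neg_one_pow_congr' _ _ (by omega)
    · -- a ≥ 0, b < 0, c ≥ 0  (case A1)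
      rw [if_pos ⟨hc, by omega⟩, if_neg (by omega), if_pos ⟨ha, by omega⟩]
      rw [cbinom_neg (-a - 1) c.toNat,
        show ((c.toNat : ℤ) - (-a - 1) - 1) = a + c by omega,
        show (-b - 1) = a + c by omega,
        cbinom_symm (a + c) (by omega) c.toNat a.toNat (by omega)]
      rw [sub_zero, mul_comm, ← mul_assoc, ← pow_add]
      rw [show ((-1 : ℂ)) ^ (c.toNat + c.toNat) = 1 by
        rw [← two_mul, pow_mul]; norm_num]
      ring
    · -- a ≥ 0, b < 0, c < 0  (case A3)
      rw [if_neg (by omega), if_neg (by omega), if_pos ⟨ha, by omega⟩]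
      rw [cbinom_zero_of_lt (-b - 1) (by omega) a.toNat (by omega)]
      ring
    · -- a < 0, b ≥ 0, c ≥ 0  (case B1)
      rw [if_pos ⟨hc, by omega⟩, if_pos ⟨hb, by omega⟩, if_neg (by omega)]
      rw [cbinom_symm (-a - 1) (by omega) c.toNat b.toNat (by omega),
        show ((-a - 1) - b) = c by omega, neg_one_zpow_natAbs c,
        neg_one_pow_congr' c.toNat c.natAbs (by omega)]
      ring
    · -- a < 0, b ≥ 0, c < 0  (case B3)
      rw [if_neg (by omega), if_pos ⟨hb, by omega⟩, if_neg (by omega)]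
      rw [cbinom_zero_of_lt (-a - 1) (by omega) b.toNat (by omega)]
      ring
    · -- a < 0, b < 0, c ≥ 0  (case B2)
      rw [if_pos ⟨hc, by omega⟩, if_neg (by omega), if_neg (by omega)]
      rw [cbinom_zero_of_lt (-a - 1) (by omega) c.toNat (by omega)]
      ring
    · omega
  · rw [if_neg (by omega), if_neg (by omega), if_neg (by omega)]
    ring
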